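/- Let k be an algebraically closed field of characteristic p ≥ 3, let m ≥ 1, r := p^m, and let F = k(t,u) be a hyperelliptic function field with u² = (t^r − t)^{ν₀} · ((t^r − t)^{r−1} + 1)^{ν₁} · ∏_{j=1}^{s} ( ((t^r − t)^{r−1} + 1)^{r+1} − a_j (t^r − t)^{r²−r} ), where ν₀, ν₁ ∈ {0,1}, s ∈ ℕ, and the a_j ∈ k∖{0} are pairwise distinct. Then there exists a field automorphism σ of F fixing k with σ(t) = t + 1 and σ(u) = u. -/
import Mathlib
open Polynomial

noncomputable def shiftRF (k : Type*) [Field k] : RatFunc k ≃ₐ[k] RatFunc k :=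
  AlgEquiv.ofRingEquiv
    (f := IsFractionRing.ringEquivOfRingEquiv (algEquivAevalXAddC (1:k)).toRingEquiv)
    (by
      intro c
      rw [IsScalarTower.algebraMap_apply k k[X] (RatFunc k),
        IsFractionRing.ringEquivOfRingEquiv_algebraMap]
      simp)

theorem shiftRF_algebraMap {k : Type*} [Field k] (q : k[X]) :
    shiftRF k (algebraMap k[X] (RatFunc k) q) = algebraMap k[X] (RatFunc k) (aeval (X + C 1) q) := by
  simp [shiftRF, AlgEquiv.ofRingEquiv]

theorem shiftRF_X (k : Type*) [Field k] : shiftRF k RatFunc.X = RatFunc.X + 1 := by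
  rw [← RatFunc.algebraMap_X, shiftRF_algebraMap]
  simp [← IsScalarTower.algebraMap_apply k k[X] (RatFunc k)]

theorem not_square_ratfunc {k : Type*} [Field k] {D : k[X]} (hsq : Squarefree D)
    (hdeg : D.natDegree ≠ 0) (w : RatFunc k) : w ^ 2 ≠ algebraMap k[X] (RatFunc k) D := by
  intro h
  have hint : IsIntegral k[X] w :=
    ⟨X ^ 2 - C D, monic_X_pow_sub_C _ two_ne_zero, by simp [h]⟩
  obtain ⟨v, hv⟩ := IsIntegrallyClosed.isIntegral_iff.mp hint
  have hv2 : v ^ 2 = D := by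
    apply IsFractionRing.injective k[X] (RatFunc k)
    rw [map_pow, hv, h]
  have hunit : IsUnit v := hsq v (by rw [← hv2]; exact ⟨1, by ring⟩)
  exact hdeg (by rw [← hv2]; exact natDegree_eq_zero_of_isUnit (hunit.pow 2))

set_option maxHeartbeats 1000000 in
set_option synthInstance.maxHeartbeats 400000 in
/-- Let `k` be algebraically closed of characteristic `p ≥ 3`,
`r = p^m` (`m ≥ 1`), and `F = k(t,u)` a hyperelliptic function field in the
`PGL₂`-normal form. Then there is a `k`-automorphism `σ : t ↦ t + 1, u ↦ u`. -/
theorem stmt10 (k F : Type*) [Field k] [Field F] [Algebra k F] [IsAlgClosed k]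
    (p : ℕ) (hp : p.Prime) (hp3 : 3 ≤ p) [CharP k p]
    (m : ℕ) (hm : 1 ≤ m) (r : ℕ) (hr : r = p ^ m)
    (ν₀ ν₁ s : ℕ) (hν₀ : ν₀ ≤ 1) (hν₁ : ν₁ ≤ 1)
    (a : Fin s → k) (ha : Function.Injective a) (ha0 : ∀ j, a j ≠ 0)
    (t u : F) (htr : Transcendental k t)
    (hFtu : IntermediateField.adjoin k {t, u} = ⊤)
    (hu : u ^ 2 = (t ^ r - t) ^ ν₀ * ((t ^ r - t) ^ (r - 1) + 1) ^ ν₁ *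
      ∏ j, (((t ^ r - t) ^ (r - 1) + 1) ^ (r + 1) -
        algebraMap k F (a j) * (t ^ r - t) ^ (r ^ 2 - r)))
    (hsep : ((X ^ r - X) ^ ν₀ * ((X ^ r - X) ^ (r - 1) + 1) ^ ν₁ *
      ∏ j, (((X ^ r - X) ^ (r - 1) + 1) ^ (r + 1) -
        C (a j) * (X ^ r - X) ^ (r ^ 2 - r)) : Polynomial k).Separable)
    (hgenus : ∃ g : ℕ, 1 < g ∧
      (((X ^ r - X) ^ ν₀ * ((X ^ r - X) ^ (r - 1) + 1) ^ ν₁ *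
          ∏ j, (((X ^ r - X) ^ (r - 1) + 1) ^ (r + 1) -
            C (a j) * (X ^ r - X) ^ (r ^ 2 - r)) : Polynomial k).natDegree = 2 * g + 1 ∨
       ((X ^ r - X) ^ ν₀ * ((X ^ r - X) ^ (r - 1) + 1) ^ ν₁ *
          ∏ j, (((X ^ r - X) ^ (r - 1) + 1) ^ (r + 1) -
            C (a j) * (X ^ r - X) ^ (r ^ 2 - r)) : Polynomial k).natDegree = 2 * g + 2)) :
    ∃ σ : F ≃ₐ[k] F, σ t = t + 1 ∧ σ u = u := by
  classical
  haveI := Fact.mk hp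
  -- the lifted algebra hom `RatFunc k →ₐ[k] F`, `X ↦ t`
  have hinj := transcendental_iff_injective.mp htr
  set f1 : RatFunc k →ₐ[k] F := RatFunc.liftAlgHom (Polynomial.aeval t)
    (nonZeroDivisors_le_comap_nonZeroDivisors_of_injective _ hinj) with hf1def
  have hf1 : ∀ q : k[X], f1 (algebraMap k[X] (RatFunc k) q) = aeval t q := by
    intro q
    have := RatFunc.liftAlgHom_apply_div (φ := (Polynomial.aeval t : k[X] →ₐ[k] F))
      (hφ := nonZeroDivisors_le_comap_nonZeroDivisors_of_injective _ hinj) q 1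
    simpa using this
  have hf1X : f1 RatFunc.X = t := by rw [← RatFunc.algebraMap_X, hf1, aeval_X]
  set K : IntermediateField k F := f1.fieldRange with hKdef
  haveI : CharP K p := charP_of_injective_algebraMap (algebraMap k K).injective p
  -- the isomorphism `e : RatFunc k ≃ₐ[k] K`
  let f1' : RatFunc k →ₐ[k] K :=
    { toFun := fun x => ⟨f1 x, ⟨x, rfl⟩⟩
      map_one' := Subtype.ext (map_one f1)
      map_mul' := fun x y => Subtype.ext (map_mul f1 x y)
      map_zero' := Subtype.ext (map_zero f1)
      map_add' := fun x y => Subtype.ext (map_add f1 x y)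
      commutes' := fun c => Subtype.ext (by simpa using f1.commutes c) }
  have hf1'coe : ∀ x, (f1' x : F) = f1 x := fun _ => rfl
  have hbij : Function.Bijective f1' := by
    constructor
    · intro x y hxy
      exact f1.toRingHom.injective (congrArg Subtype.val hxy)
    · rintro ⟨y, x, rfl⟩
      exact ⟨x, rfl⟩
  let e : RatFunc k ≃ₐ[k] K := AlgEquiv.ofBijective f1' hbij
  have hecoe : ∀ x, (e x : F) = f1 x := fun _ => rfl
  let τ : K ≃ₐ[k] K := (e.symm.trans (shiftRF k)).trans e
  set t' : K := e RatFunc.X with ht'def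
  have ht'F : algebraMap K F t' = t := hf1X
  have hτt : τ t' = t' + 1 := by
    show e (shiftRF k (e.symm (e RatFunc.X))) = _
    rw [e.symm_apply_apply, shiftRF_X, map_add, map_one]
  -- the element d ∈ K
  set dK : K := (t' ^ r - t') ^ ν₀ * ((t' ^ r - t') ^ (r - 1) + 1) ^ ν₁ *
    ∏ j, (((t' ^ r - t') ^ (r - 1) + 1) ^ (r + 1) -
      algebraMap k K (a j) * (t' ^ r - t') ^ (r ^ 2 - r)) with hdKdef
  have hdKF : algebraMap K F dK = (t ^ r - t) ^ ν₀ * ((t ^ r - t) ^ (r - 1) + 1) ^ ν₁ *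
      ∏ j, (((t ^ r - t) ^ (r - 1) + 1) ^ (r + 1) -
        algebraMap k F (a j) * (t ^ r - t) ^ (r ^ 2 - r)) := by
    simp only [hdKdef, map_mul, map_prod, map_sub, map_pow, map_add, map_one, ht'F,
      ← IsScalarTower.algebraMap_apply]
  have hudK : u ^ 2 = algebraMap K F dK := by rw [hdKF]; exact hu
  have hτd : τ dK = dK := by
    have key : (t' + 1) ^ r - (t' + 1) = t' ^ r - t' := by
      subst hr
      rw [add_pow_char_pow, one_pow]
      ring
    simp only [hdKdef, map_mul, map_prod, map_sub, map_pow, map_add, map_one,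
      AlgEquiv.commutes, hτt, key]
  -- dK is not a square in K
  set Dp : k[X] := (X ^ r - X) ^ ν₀ * ((X ^ r - X) ^ (r - 1) + 1) ^ ν₁ *
    ∏ j, (((X ^ r - X) ^ (r - 1) + 1) ^ (r + 1) -
      C (a j) * (X ^ r - X) ^ (r ^ 2 - r)) with hDpdef
  have hDpdeg : Dp.natDegree ≠ 0 := by
    obtain ⟨g, hg, h | h⟩ := hgenus <;> omega
  have hDpsf : Squarefree Dp := hsep.squarefree
  let gmap : k[X] →+* K := (e : RatFunc k →ₐ[k] K).toRingHom.comp (algebraMap k[X] (RatFunc k))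
  have hgC : ∀ c : k, gmap (C c) = algebraMap k K c := by
    intro c
    show e (algebraMap k[X] (RatFunc k) (C c)) = _
    rw [← Polynomial.algebraMap_eq, ← IsScalarTower.algebraMap_apply, AlgEquiv.commutes]
  have hgX : gmap X = t' := by
    show e (algebraMap k[X] (RatFunc k) X) = t'
    rw [RatFunc.algebraMap_X, ht'def]
  have hedK : gmap Dp = dK := by
    simp only [hDpdef, hdKdef, map_mul, map_prod, map_sub, map_pow, map_add, map_one, hgC, hgX]
  have hns : ∀ b : K, b ^ 2 ≠ dK := by
    intro b hb
    apply not_square_ratfunc hDpsf hDpdeg (e.symm b)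
    apply e.injective
    rw [map_pow, e.apply_symm_apply, hb, ← hedK]
    rfl
  -- minimal polynomial of u over K
  have haev : (Polynomial.aeval u) ((X : Polynomial K) ^ 2 - C dK) = 0 := by
    rw [map_sub, map_pow, aeval_X, aeval_C, hudK, sub_self]
  have hint_u : IsIntegral K u := ⟨X ^ 2 - C dK, monic_X_pow_sub_C _ two_ne_zero, haev⟩
  have hmin : minpoly K u = X ^ 2 - C dK :=
    (minpoly.eq_of_irreducible_of_monic
      (X_pow_sub_C_irreducible_of_prime Nat.prime_two hns) haev
      (monic_X_pow_sub_C _ two_ne_zero)).symm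
  -- (IntermediateField.adjoin K {u}) = F
  have htK : t ∈ K := ⟨RatFunc.X, hf1X⟩
  have hKu : IntermediateField.adjoin K {u} = ⊤ := by
    rw [eq_top_iff]
    have hle : IntermediateField.adjoin k {t, u} ≤
        (IntermediateField.adjoin K {u}).restrictScalars k := by
      apply IntermediateField.adjoin_le_iff.mpr
      intro y hy
      rw [SetLike.mem_coe, IntermediateField.mem_restrictScalars]
      rcases hy with rfl | rfl
      · exact IntermediateField.algebraMap_mem (IntermediateField.adjoin K {u}) (⟨y, htK⟩ : K)
      · exact IntermediateField.subset_adjoin _ _ rfl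
    intro x _
    exact hle (by rw [hFtu]; trivial)
  let e1 := IntermediateField.adjoinRootEquivAdjoin K hint_u
  let jhom : (IntermediateField.adjoin K {u}) →ₐ[K] F := IntermediateField.val _
  have hjbij : Function.Bijective jhom :=
    ⟨Subtype.val_injective, fun x => ⟨⟨x, by rw [hKu]; trivial⟩, rfl⟩⟩
  let j := AlgEquiv.ofBijective jhom hjbij
  have hj : ∀ x : (IntermediateField.adjoin K {u}), j.symm (x : F) = x := fun x => by
    have hx : (x : F) = j x := rfl
    rw [hx, AlgEquiv.symm_apply_apply]
  let τ' : K →+* F := (algebraMap K F).comp τ.toAlgHom.toRingHom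
  have hroot : Polynomial.eval₂ τ' u (minpoly K u) = 0 := by
    rw [hmin, eval₂_sub, eval₂_pow, eval₂_X, eval₂_C]
    show u ^ 2 - algebraMap K F (τ dK) = 0
    rw [hτd, hudK, sub_self]
  let φ : AdjoinRoot (minpoly K u) →+* F := AdjoinRoot.lift τ' u hroot
  let σ0 : F →+* F := φ.comp ((e1.symm.toAlgHom.toRingHom).comp (j.symm.toAlgHom.toRingHom))
  have hσ0 : ∀ x : (IntermediateField.adjoin K {u}), σ0 (x : F) = φ (e1.symm x) := by
    intro x
    show φ (e1.symm (j.symm (x : F))) = φ (e1.symm x)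
    rw [hj]
  have hσK : ∀ x : K, σ0 (algebraMap K F x) = algebraMap K F (τ x) := by
    intro x
    have h2 : algebraMap K F x = ((algebraMap K (IntermediateField.adjoin K {u}) x : (IntermediateField.adjoin K {u})) : F) :=
      (IsScalarTower.algebraMap_apply K (IntermediateField.adjoin K {u}) F x)
    rw [h2, hσ0, AlgEquiv.commutes, AdjoinRoot.algebraMap_eq]
    exact AdjoinRoot.lift_of hroot
  have hσt : σ0 t = t + 1 := by
    rw [← ht'F, hσK, hτt, map_add, map_one, ht'F]
  have hσu : σ0 u = u := by
    have hgen : u = ((IntermediateField.AdjoinSimple.gen K u : (IntermediateField.adjoin K {u})) : F) := rfl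
    rw [hgen, hσ0, IntermediateField.adjoinRootEquivAdjoin_symm_apply_gen]
    exact AdjoinRoot.lift_root hroot
  have hσk : ∀ c : k, σ0 (algebraMap k F c) = algebraMap k F c := by
    intro c
    rw [IsScalarTower.algebraMap_apply k K F, hσK, AlgEquiv.commutes,
      ← IsScalarTower.algebraMap_apply k K F]
  let σA : F →ₐ[k] F := { σ0 with commutes' := hσk }
  have hσAt : σA t = t + 1 := hσt
  have hσAu : σA u = u := hσu
  have hsur : Function.Surjective σA := by
    have hmemt : t ∈ σA.fieldRange :=
      ⟨t - 1, by show σ0 (t - 1) = t; rw [map_sub, hσt, map_one]; ring⟩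
    have hmemu : u ∈ σA.fieldRange := ⟨u, hσu⟩
    have hrange : IntermediateField.adjoin k {t, u} ≤ σA.fieldRange := by
      apply IntermediateField.adjoin_le_iff.mpr
      intro y hy
      rcases hy with rfl | rfl
      exacts [hmemt, hmemu]
    intro y
    have hy : y ∈ σA.fieldRange := hrange (by rw [hFtu]; trivial)
    exact hy
  refine ⟨AlgEquiv.ofBijective σA ⟨σ0.injective, hsur⟩, hσAt, hσAu⟩
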